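/- Let y : [0,∞) → ℝ^N satisfy y'(t) = f(y(t)), where f : ℝ^N → ℝ^N is differentiable and there are positive constants C₁, C₂, δ such that for every t ∈ [0,∞) and x ∈ ℝ^N with ‖x − y(t)‖₂ ≤ δ one has ‖f(x)‖₂ ≤ C₁ and ‖∇f(x)‖_op ≤ C₂. Fix T ∈ [0,∞) and ε > 0, let 0 < η ≤ (min{ε, δ}/C₁)·e^{−C₂T}, and define the forward Euler iterates y₀ = y(0) and y_{k+1} = y_k + η f(y_k) for k = 0,…,⌊T/η⌋−1. Then ‖y(T) − y_{⌊T/η⌋}‖₂ ≤ ε. -/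

import Mathlib

noncomputable section

/-- The Euclidean (ℓ²) norm of a vector in ℝⁿ. -/
def norm2 {n : ℕ} (v : Fin n → ℝ) : ℝ := Real.sqrt (∑ i, v i ^ 2)

/-- The ℓ¹ norm of a vector in ℝⁿ. -/
def norm1 {n : ℕ} (v : Fin n → ℝ) : ℝ := ∑ i, |v i|

/-- The sup (ℓ^∞) norm of a vector in ℝⁿ. -/
def normInf {n : ℕ} (v : Fin n → ℝ) : ℝ := ⨆ i, |v i|

/-- The ℓʳ (quasi-)norm ‖v‖_r = (∑ |v i|^r)^(1/r). -/
def normr {n : ℕ} (r : ℝ) (v : Fin n → ℝ) : ℝ := (∑ i, |v i| ^ r) ^ (1 / r)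

/-- The smallest singular value of `A`, via `σ_min(A) = inf {‖Aᵀ z‖₂ : ‖z‖₂ = 1}`. -/
def sigmaMin {m N : ℕ} (A : Matrix (Fin m) (Fin N) ℝ) : ℝ :=
  sInf {c : ℝ | ∃ z : Fin m → ℝ, norm2 z = 1 ∧ c = norm2 (A.transpose.mulVec z)}

/-- The entropy H(z) = −∑ |z i| ln |z i| (with the convention 0 · ln 0 = 0,
which holds automatically since `Real.log 0 = 0`). -/
def Hent {n : ℕ} (z : Fin n → ℝ) : ℝ := -∑ i, |z i| * Real.log |z i|

/-- The set 𝒰(A,y) of basis-pursuit minimizers: minimizers of ‖·‖₁ subject to Az = y. -/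
def BPset {m N : ℕ} (A : Matrix (Fin m) (Fin N) ℝ) (y : Fin m → ℝ) : Set (Fin N → ℝ) :=
  {z | A.mulVec z = y ∧ ∀ w : Fin N → ℝ, A.mulVec w = y → norm1 z ≤ norm1 w}

/-- The basis-pursuit minimum value R(A,y) = min {‖z‖₁ : Az = y}. -/
def Rmin {m N : ℕ} (A : Matrix (Fin m) (Fin N) ℝ) (y : Fin m → ℝ) : ℝ :=
  sInf (norm1 '' {z : Fin N → ℝ | A.mulVec z = y})

/-- The function h_p: h₂(t) = 2 sinh t, and for p > 2,
h_p(t) = (1−t)^{−p/(p−2)} − (1+t)^{−p/(p−2)}. -/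
def hfun (p t : ℝ) : ℝ :=
  if p = 2 then 2 * Real.sinh t
  else (1 - t) ^ (-(p / (p - 2))) - (1 + t) ^ (-(p / (p - 2)))

/-- The natural domain of h_p: all of ℝ when p = 2, and (−1,1) when p > 2. -/
def hDomain (p : ℝ) : Set ℝ := if p = 2 then Set.univ else Set.Ioo (-1) 1

/-- The inverse h_p^{-1} : ℝ → ℝ of h_p (h_p is a strictly increasing bijection
from its domain onto ℝ). -/
def hInv (p u : ℝ) : ℝ := Function.invFunOn (hfun p) (hDomain p) u

/-- q_p(u) = ∫₀ᵘ h_p^{−1}(v) dv. -/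
def qfun (p u : ℝ) : ℝ := ∫ v in (0:ℝ)..u, hInv p v

/-- Q_p(z) = α^p ∑ q_p(z i / α^p). -/
def Qfun {n : ℕ} (p α : ℝ) (z : Fin n → ℝ) : ℝ := α ^ p * ∑ i, qfun p (z i / α ^ p)

/-- g_p: g₂(u) = |u| ln(|u|/e) (with g₂(0) = 0), and for p > 2,
g_p(u) = |u| − (p/2)|u|^{2/p}. -/
def gfun (p u : ℝ) : ℝ :=
  if p = 2 then (if u = 0 then 0 else |u| * Real.log (|u| / Real.exp 1))
  else |u| - p / 2 * |u| ^ (2 / p)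

/-- G_p(z) = α^p ∑ g_p(z i / α^p). -/
def Gfun {n : ℕ} (p α : ℝ) (z : Fin n → ℝ) : ℝ := α ^ p * ∑ i, gfun p (z i / α ^ p)

/-- The predictor ψ_θ = θ₊^p − θ₋^p (componentwise powers), for a parameter vector
θ = (θ₊, θ₋) ∈ ℝ^{2N}. -/
def psiOf {N : ℕ} (p : ℝ) (θ : EuclideanSpace ℝ (Fin N ⊕ Fin N)) : Fin N → ℝ :=
  fun i => θ (Sum.inl i) ^ p - θ (Sum.inr i) ^ p

/-- The squared loss L(θ) = (1/2)‖A ψ_θ − y‖₂². -/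
def lossFun {m N : ℕ} (A : Matrix (Fin m) (Fin N) ℝ) (y : Fin m → ℝ) (p : ℝ)
    (θ : EuclideanSpace ℝ (Fin N ⊕ Fin N)) : ℝ :=
  (1 / 2) * ∑ j, (A.mulVec (psiOf p θ) j - y j) ^ 2

end
set_option maxHeartbeats 1000000 in
/-- Theorem `euler_method`: global truncation error of the forward
Euler method: if y' = f(y) on [0,∞), ‖f‖₂ ≤ C₁ and ‖∇f‖_op ≤ C₂ within distance δ of
the solution path, T ≥ 0, ε > 0 and 0 < η ≤ (min{ε,δ}/C₁)e^{−C₂T}, then the Euler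
iterates y₀ = y(0), y_{k+1} = y_k + η f(y_k) satisfy ‖y(T) − y_{⌊T/η⌋}‖₂ ≤ ε. -/
theorem stmt19 (N : ℕ)
    (f : EuclideanSpace ℝ (Fin N) → EuclideanSpace ℝ (Fin N))
    (hf : Differentiable ℝ f)
    (y : ℝ → EuclideanSpace ℝ (Fin N))
    (hy : ∀ t : ℝ, 0 ≤ t → HasDerivWithinAt y (f (y t)) (Set.Ici 0) t)
    (C₁ C₂ δ : ℝ) (hC₁ : 0 < C₁) (hC₂ : 0 < C₂) (hδ : 0 < δ)
    (hbound : ∀ t : ℝ, 0 ≤ t → ∀ x : EuclideanSpace ℝ (Fin N), ‖x - y t‖ ≤ δ →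
      ‖f x‖ ≤ C₁ ∧ ‖fderiv ℝ f x‖ ≤ C₂)
    (T : ℝ) (hT : 0 ≤ T) (ε : ℝ) (hε : 0 < ε)
    (η : ℝ) (hη : 0 < η) (hη2 : η ≤ min ε δ / C₁ * Real.exp (-C₂ * T))
    (yk : ℕ → EuclideanSpace ℝ (Fin N))
    (hyk0 : yk 0 = y 0)
    (hykstep : ∀ k : ℕ, yk (k + 1) = yk k + η • f (yk k)) :
    ‖y T - yk ⌊T / η⌋₊‖ ≤ ε := by
  -- basic constants
  have hmin : 0 < min ε δ := lt_min hε hδ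
  have hexp : 0 < Real.exp (-C₂ * T) := Real.exp_pos _
  have hexp1 : Real.exp (-C₂ * T) ≤ 1 := by
    rw [Real.exp_le_one_iff]; nlinarith
  have hηC₁ : η * C₁ ≤ min ε δ * Real.exp (-C₂ * T) := by
    have := mul_le_mul_of_nonneg_right hη2 hC₁.le
    calc η * C₁ ≤ (min ε δ / C₁ * Real.exp (-C₂ * T)) * C₁ := this
      _ = min ε δ * Real.exp (-C₂ * T) := by field_simp
  have hηC₁min : η * C₁ ≤ min ε δ := by nlinarith
  have hηC₁δ : η * C₁ ≤ δ := hηC₁min.trans (min_le_right _ _)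
  -- `f` is bounded by C₁ on the path
  have hfbound : ∀ t : ℝ, 0 ≤ t → ‖f (y t)‖ ≤ C₁ := fun t ht =>
    (hbound t ht (y t) (by simp [hδ.le])).1
  -- the path is C₁-Lipschitz
  have lipy : ∀ s t : ℝ, 0 ≤ s → s ≤ t → ‖y t - y s‖ ≤ C₁ * (t - s) := by
    intro s t hs hst
    have key := Convex.norm_image_sub_le_of_norm_hasDerivWithin_le
      (f := y) (f' := fun u => f (y u)) (s := Set.Icc s t) (C := C₁)
      (fun u hu => (hy u (hs.trans hu.1)).mono (fun x hx => hs.trans hx.1))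
      (fun u hu => hfbound u (hs.trans hu.1)) (convex_Icc s t)
      (Set.left_mem_Icc.2 hst) (Set.right_mem_Icc.2 hst)
    calc ‖y t - y s‖ ≤ C₁ * ‖t - s‖ := key
      _ = C₁ * (t - s) := by rw [Real.norm_eq_abs, abs_of_nonneg (by linarith)]
  -- `f` is C₂-Lipschitz within distance δ of the path
  have lipf : ∀ s : ℝ, 0 ≤ s → ∀ x₁ x₂ : EuclideanSpace ℝ (Fin N),
      ‖x₁ - y s‖ ≤ δ → ‖x₂ - y s‖ ≤ δ → ‖f x₁ - f x₂‖ ≤ C₂ * ‖x₁ - x₂‖ := by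
    intro s hs x₁ x₂ h1 h2
    exact Convex.norm_image_sub_le_of_norm_fderiv_le
      (f := f) (s := Metric.closedBall (y s) δ)
      (fun x _ => hf x)
      (fun x hx => (hbound s hs x (by
        rw [Metric.mem_closedBall, dist_eq_norm] at hx; exact hx)).2)
      (convex_closedBall _ _)
      (by rw [Metric.mem_closedBall, dist_eq_norm]; exact h2)
      (by rw [Metric.mem_closedBall, dist_eq_norm]; exact h1)
  -- local truncation error
  have htrunc : ∀ s : ℝ, 0 ≤ s →
      ‖y (s + η) - y s - η • f (y s)‖ ≤ C₁ * C₂ * η ^ 2 := by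
    intro s hs
    set g : ℝ → EuclideanSpace ℝ (Fin N) :=
      fun t => y t - y s - (t - s) • f (y s) with hg
    have hIcc : Set.Icc s (s + η) ⊆ Set.Ici 0 := fun x hx => hs.trans hx.1
    have hgderiv : ∀ t ∈ Set.Icc s (s + η),
        HasDerivWithinAt g (f (y t) - f (y s)) (Set.Icc s (s + η)) t := by
      intro t ht
      have h1 : HasDerivWithinAt y (f (y t)) (Set.Icc s (s + η)) t :=
        (hy t (hs.trans ht.1)).mono hIcc
      have h2 : HasDerivWithinAt (fun t : ℝ => (t - s) • f (y s)) (f (y s))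
          (Set.Icc s (s + η)) t := by
        have := ((hasDerivWithinAt_id t (Set.Icc s (s + η))).sub_const s).smul_const (f (y s))
        simpa using this
      exact (h1.sub_const (y s)).sub h2
    have hbnd : ∀ t ∈ Set.Icc s (s + η), ‖f (y t) - f (y s)‖ ≤ C₂ * (C₁ * η) := by
      intro t ht
      have hyt : ‖y t - y s‖ ≤ C₁ * η := by
        have h1 := lipy s t hs ht.1
        have h2 : C₁ * (t - s) ≤ C₁ * η :=
          mul_le_mul_of_nonneg_left (by linarith [ht.2]) hC₁.le
        linarith
      have h1 : ‖y t - y s‖ ≤ δ := hyt.trans (by linarith)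
      have := lipf s hs (y t) (y s) h1 (by simp [hδ.le])
      calc ‖f (y t) - f (y s)‖ ≤ C₂ * ‖y t - y s‖ := this
        _ ≤ C₂ * (C₁ * η) := by nlinarith
    have key := Convex.norm_image_sub_le_of_norm_hasDerivWithin_le
      (f := g) (f' := fun t => f (y t) - f (y s)) (s := Set.Icc s (s + η))
      (C := C₂ * (C₁ * η)) hgderiv hbnd (convex_Icc _ _)
      (Set.left_mem_Icc.2 (by linarith)) (Set.right_mem_Icc.2 (by linarith))
    have hgs : g s = 0 := by simp [hg]
    have hgsη : g (s + η) = y (s + η) - y s - η • f (y s) := by simp [hg]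
    rw [hgs, sub_zero, hgsη] at key
    calc ‖y (s + η) - y s - η • f (y s)‖ ≤ C₂ * (C₁ * η) * ‖s + η - s‖ := key
      _ = C₁ * C₂ * η ^ 2 := by
          rw [show s + η - s = η by ring, Real.norm_eq_abs, abs_of_pos hη]; ring
  set K := ⌊T / η⌋₊ with hKdef
  have hKη : (K : ℝ) * η ≤ T := by
    have := Nat.floor_le (div_nonneg hT hη.le)
    calc (K : ℝ) * η ≤ T / η * η := by nlinarith
      _ = T := by field_simp
  have hTK : T < ((K : ℝ) + 1) * η := by
    have := Nat.lt_floor_add_one (T / η)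
    calc T = T / η * η := by field_simp
      _ < ((K : ℝ) + 1) * η := by push_cast at this ⊢; nlinarith
  -- exponential bound on powers
  have hpow : ∀ k : ℕ, k ≤ K → (1 + η * C₂) ^ k ≤ Real.exp (C₂ * T) := by
    intro k hk
    have hkη : (k : ℝ) * η ≤ T := by
      have : (k : ℝ) ≤ K := by exact_mod_cast hk
      nlinarith
    calc (1 + η * C₂) ^ k ≤ Real.exp (η * C₂) ^ k :=
          pow_le_pow_left₀ (by nlinarith) (by linarith [Real.add_one_le_exp (η * C₂)]) k
      _ = Real.exp ((k : ℝ) * (η * C₂)) := by rw [← Real.exp_nat_mul]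
      _ ≤ Real.exp (C₂ * T) := by apply Real.exp_le_exp.2; nlinarith
  -- the global bound consequence
  have hglob : ∀ k : ℕ, k ≤ K → C₁ * η * ((1 + η * C₂) ^ k - 1) ≤ min ε δ := by
    intro k hk
    have h1 := hpow k hk
    have h1' : (1 + η * C₂) ^ k - 1 ≤ Real.exp (C₂ * T) := by linarith
    have hstep : C₁ * η * ((1 + η * C₂) ^ k - 1) ≤ C₁ * η * Real.exp (C₂ * T) :=
      mul_le_mul_of_nonneg_left h1' (by positivity)
    have h3 := mul_le_mul_of_nonneg_right hηC₁ (Real.exp_pos (C₂ * T)).le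
    calc C₁ * η * ((1 + η * C₂) ^ k - 1) ≤ C₁ * η * Real.exp (C₂ * T) := hstep
      _ = η * C₁ * Real.exp (C₂ * T) := by ring
      _ ≤ min ε δ * Real.exp (-C₂ * T) * Real.exp (C₂ * T) := h3
      _ = min ε δ := by rw [mul_assoc, ← Real.exp_add]; simp
  -- main induction
  have main : ∀ k : ℕ, k ≤ K →
      ‖y ((k : ℝ) * η) - yk k‖ ≤ C₁ * η * ((1 + η * C₂) ^ k - 1) := by
    intro k hk
    induction k with
    | zero => simp [hyk0]
    | succ k ih =>
      have hk' : k ≤ K := Nat.le_of_succ_le hk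
      have ihk := ih hk'
      have hkη0 : (0 : ℝ) ≤ (k : ℝ) * η := by positivity
      have hek_δ : ‖yk k - y ((k : ℝ) * η)‖ ≤ δ := by
        rw [norm_sub_rev]
        exact ihk.trans ((hglob k hk').trans (min_le_right _ _))
      have hlipstep := lipf ((k : ℝ) * η) hkη0 (yk k) (y ((k : ℝ) * η)) hek_δ
        (by simp [hδ.le])
      have htr := htrunc ((k : ℝ) * η) hkη0
      have hsplit : y (((k : ℝ) + 1) * η) - yk (k + 1) =
          (y ((k : ℝ) * η + η) - y ((k : ℝ) * η) - η • f (y ((k : ℝ) * η)))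
          + (y ((k : ℝ) * η) - yk k)
          + η • (f (y ((k : ℝ) * η)) - f (yk k)) := by
        rw [hykstep k]
        rw [show ((k : ℝ) + 1) * η = (k : ℝ) * η + η by ring]
        simp only [smul_sub]
        abel
      have hnorm : ‖y (((k : ℝ) + 1) * η) - yk (k + 1)‖ ≤
          C₁ * C₂ * η ^ 2 + ‖y ((k : ℝ) * η) - yk k‖
          + η * ‖f (y ((k : ℝ) * η)) - f (yk k)‖ := by
        rw [hsplit]
        refine (norm_add_le _ _).trans ?_
        have := norm_add_le (y ((k : ℝ) * η + η) - y ((k : ℝ) * η) - η • f (y ((k : ℝ) * η)))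
          (y ((k : ℝ) * η) - yk k)
        rw [norm_smul, Real.norm_eq_abs, abs_of_pos hη]
        linarith
      have hfy : ‖f (y ((k : ℝ) * η)) - f (yk k)‖ ≤ C₂ * ‖y ((k : ℝ) * η) - yk k‖ := by
        calc ‖f (y ((k : ℝ) * η)) - f (yk k)‖
            = ‖f (yk k) - f (y ((k : ℝ) * η))‖ := norm_sub_rev _ _
          _ ≤ C₂ * ‖yk k - y ((k : ℝ) * η)‖ := hlipstep
          _ = C₂ * ‖y ((k : ℝ) * η) - yk k‖ := by rw [norm_sub_rev]
      have hcast : ((k + 1 : ℕ) : ℝ) = (k : ℝ) + 1 := by push_cast; ring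
      rw [hcast]
      have hed : ‖y ((k : ℝ) * η) - yk k‖ ≤ C₁ * η * ((1 + η * C₂) ^ k - 1) := ihk
      have hgoal : C₁ * C₂ * η ^ 2 + (1 + η * C₂) * (C₁ * η * ((1 + η * C₂) ^ k - 1))
          = C₁ * η * ((1 + η * C₂) ^ (k + 1) - 1) := by ring
      have hpownn : (0 : ℝ) ≤ (1 + η * C₂) ^ k - 1 := by
        have : (1 : ℝ) ≤ (1 + η * C₂) ^ k := one_le_pow₀ (by nlinarith)
        linarith
      calc ‖y (((k : ℝ) + 1) * η) - yk (k + 1)‖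
          ≤ C₁ * C₂ * η ^ 2 + ‖y ((k : ℝ) * η) - yk k‖
            + η * ‖f (y ((k : ℝ) * η)) - f (yk k)‖ := hnorm
        _ ≤ C₁ * C₂ * η ^ 2 + ‖y ((k : ℝ) * η) - yk k‖
            + η * (C₂ * ‖y ((k : ℝ) * η) - yk k‖) := by nlinarith [hfy]
        _ = C₁ * C₂ * η ^ 2 + (1 + η * C₂) * ‖y ((k : ℝ) * η) - yk k‖ := by ring
        _ ≤ C₁ * C₂ * η ^ 2 + (1 + η * C₂) * (C₁ * η * ((1 + η * C₂) ^ k - 1)) := by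
            have h9 := mul_le_mul_of_nonneg_left hed (by nlinarith : (0:ℝ) ≤ 1 + η * C₂)
            linarith
        _ = C₁ * η * ((1 + η * C₂) ^ (k + 1) - 1) := hgoal
  -- final step
  have hmainK := main K le_rfl
  have hlast : ‖y T - y ((K : ℝ) * η)‖ ≤ C₁ * (T - (K : ℝ) * η) :=
    lipy ((K : ℝ) * η) T (by positivity) hKη
  have hfinal : ‖y T - yk K‖ ≤ C₁ * η + C₁ * η * ((1 + η * C₂) ^ K - 1) := by
    calc ‖y T - yk K‖ = ‖(y T - y ((K : ℝ) * η)) + (y ((K : ℝ) * η) - yk K)‖ := by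
          congr 1; abel
      _ ≤ ‖y T - y ((K : ℝ) * η)‖ + ‖y ((K : ℝ) * η) - yk K‖ := norm_add_le _ _
      _ ≤ C₁ * (T - (K : ℝ) * η) + C₁ * η * ((1 + η * C₂) ^ K - 1) := by
          linarith [hmainK]
      _ ≤ C₁ * η + C₁ * η * ((1 + η * C₂) ^ K - 1) := by nlinarith [hTK]
  have hexpK := hpow K le_rfl
  have : C₁ * η + C₁ * η * ((1 + η * C₂) ^ K - 1) = C₁ * η * (1 + η * C₂) ^ K := by ring
  rw [this] at hfinal
  have hεmin : min ε δ ≤ ε := min_le_left _ _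
  have h3 := mul_le_mul_of_nonneg_right hηC₁ (Real.exp_pos (C₂ * T)).le
  calc ‖y T - yk K‖ ≤ C₁ * η * (1 + η * C₂) ^ K := hfinal
    _ ≤ C₁ * η * Real.exp (C₂ * T) := mul_le_mul_of_nonneg_left hexpK (by positivity)
    _ = η * C₁ * Real.exp (C₂ * T) := by ring
    _ ≤ min ε δ * Real.exp (-C₂ * T) * Real.exp (C₂ * T) := h3
    _ = min ε δ := by rw [mul_assoc, ← Real.exp_add]; simp
    _ ≤ ε := hεmin
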